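/- The group of A-translations of the variable of a polynomial ring coincides with its own centralizer: the centralizer of U = {σ_f : f ∈ A} in the group of k-algebra automorphisms of A[w] equals U. -/
import Mathlib

open Polynomial

/-- The group `U = {σ_f : f ∈ A}` of `A`-translations of the variable `w` of the
polynomial ring `A[w]` (the `k`-algebra automorphisms fixing `A` pointwise and sending
`w` to `w + f` for some `f ∈ A`) coincides with its own centralizer in the group of
`k`-algebra automorphisms of `A[w]`. -/
theorem translations_eq_centralizer
    (k : Type*) [Field k] [IsAlgClosed k]
    (A : Type*) [CommRing A] [IsDomain A] [Algebra k A] :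
    (Subgroup.centralizer
        {σ : Polynomial A ≃ₐ[k] Polynomial A |
          (∀ a : A, σ (C a) = C a) ∧ ∃ f : A, σ X = X + C f} :
      Set (Polynomial A ≃ₐ[k] Polynomial A))
    = {σ : Polynomial A ≃ₐ[k] Polynomial A |
        (∀ a : A, σ (C a) = C a) ∧ ∃ f : A, σ X = X + C f} := by
  haveI : Infinite A := Infinite.of_injective (algebraMap k A) (algebraMap k A).injective
  set S : Set (Polynomial A ≃ₐ[k] Polynomial A) :=
    {σ : Polynomial A ≃ₐ[k] Polynomial A |
      (∀ a : A, σ (C a) = C a) ∧ ∃ f : A, σ X = X + C f} with hS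
  -- the translation automorphisms
  set τ : A → (Polynomial A ≃ₐ[k] Polynomial A) :=
    fun f => AlgEquiv.restrictScalars k (algEquivAevalXAddC f) with hτ
  have hτapp : ∀ f p, τ f p = p.comp (X + C f) := by
    intro f p
    simp [hτ, AlgEquiv.restrictScalars, algEquivAevalXAddC, ← comp_eq_aeval]
  have hτC : ∀ f a, τ f (C a) = C a := by intro f a; rw [hτapp]; simp
  have hτX : ∀ f, τ f X = X + C f := by intro f; rw [hτapp]; simp
  have hτmem : ∀ f, τ f ∈ S := fun f => ⟨hτC f, f, hτX f⟩
  -- key step: any element of the centralizer maps constants to constants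
  have key : ∀ σ : Polynomial A ≃ₐ[k] Polynomial A, σ ∈ Subgroup.centralizer S →
      ∀ a : A, σ (C a) = C ((σ (C a)).eval 0) := by
    intro σ hσ a
    have hcomm : ∀ f p, τ f (σ p) = σ (τ f p) := by
      intro f p
      have h := Subgroup.mem_centralizer_iff.mp hσ (τ f) (hτmem f)
      exact DFunLike.congr_fun h p
    have h1 : ∀ f : A, (σ (C a)).eval f = (σ (C a)).eval 0 := by
      intro f
      have h2 : τ f (σ (C a)) = σ (C a) := by rw [hcomm, hτC]
      rw [hτapp] at h2
      have := congrArg (Polynomial.eval (0 : A)) h2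
      simpa using this
    apply Polynomial.funext
    intro r
    rw [eval_C]
    exact h1 r
  ext σ
  constructor
  · -- centralizer ⊆ S
    intro hσ
    have hcomm : ∀ f p, τ f (σ p) = σ (τ f p) := by
      intro f p
      have h := Subgroup.mem_centralizer_iff.mp hσ (τ f) (hτmem f)
      exact DFunLike.congr_fun h p
    -- the induced ring endomorphism of A
    set g : A →+* A :=
      (constantCoeff).comp ((σ : Polynomial A →+* Polynomial A).comp C) with hgdef
    have hg : ∀ a, σ (C a) = C (g a) := by
      intro a
      rw [key σ hσ a]
      congr 1
      simp [hgdef, constantCoeff_apply, coeff_zero_eq_eval_zero]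
    have hginj : Function.Injective g := by
      intro a b hab
      have : σ (C a) = σ (C b) := by rw [hg, hg, hab]
      exact C_injective (σ.injective this)
    -- σ⁻¹ also maps constants to constants
    set q : Polynomial A := σ X with hq
    set q' : Polynomial A := σ.symm X with hq'
    -- σ applied to any polynomial
    have hσp : ∀ p : Polynomial A, σ p = (p.map g).comp q := by
      intro p
      induction p using Polynomial.induction_on' with
      | add p r hp hr => rw [map_add, hp, hr, Polynomial.map_add, add_comp]
      | monomial n a =>
          rw [← C_mul_X_pow_eq_monomial, map_mul, map_pow, hg, ← hq]
          simp [mul_comp]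
    -- σ.symm X has the same constants property via σ⁻¹
    have hXq' : (X : Polynomial A) = σ q' := by rw [hq', AlgEquiv.apply_symm_apply]
    have hone : (1 : ℕ) = q'.natDegree * q.natDegree := by
      have := congrArg natDegree (hXq'.trans (hσp q'))
      rwa [natDegree_X, natDegree_comp, natDegree_map_eq_of_injective hginj] at this
    have hdq : q.natDegree = 1 :=
      Nat.eq_one_of_dvd_one ⟨q'.natDegree, by rw [hone]; ring⟩
    have hqform : q = C (q.coeff 1) * X + C (q.coeff 0) :=
      eq_X_add_C_of_natDegree_le_one (le_of_eq hdq)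
    set b := q.coeff 1 with hb
    set c := q.coeff 0 with hc
    -- the commuting relation on X
    have hgf : ∀ f : A, g f = b * f := by
      intro f
      have h2 : (σ X).comp (X + C f) = σ X + C (g f) := by
        rw [← hτapp, hcomm, hτX, map_add, hg]
      rw [← hq, hqform] at h2
      have h4 : C (g f) = C b * C f := by
        simp only [add_comp, mul_comp, C_comp, X_comp] at h2
        linear_combination -h2
      exact C_injective (h4.trans (map_mul C b f).symm)
    have hg1 : g 1 = 1 := by
      have : σ (C 1) = C (g 1) := hg 1
      rw [C_1, map_one, ← C_1] at this
      exact (C_injective this).symm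
    have hb1 : b = 1 := by have := hgf 1; rwa [hg1, mul_one, eq_comm] at this
    refine ⟨fun a => ?_, c, ?_⟩
    · rw [hg a]
      congr 1
      have := hgf a
      rwa [hb1, one_mul] at this
    · rw [← hq, hqform, hb1, C_1, one_mul]
  · -- S ⊆ centralizer
    intro hσ
    obtain ⟨hσC, f, hσX⟩ := hσ
    refine Subgroup.mem_centralizer_iff.mpr fun ρ hρ => ?_
    obtain ⟨hρC, e, hρX⟩ := hρ
    have : ((ρ * σ : Polynomial A ≃ₐ[k] Polynomial A) : Polynomial A →+* Polynomial A)
        = ((σ * ρ : Polynomial A ≃ₐ[k] Polynomial A) : Polynomial A →+* Polynomial A) := by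
      apply Polynomial.ringHom_ext
      · intro a
        show ρ (σ (C a)) = σ (ρ (C a))
        simp [hσC, hρC]
      · show ρ (σ X) = σ (ρ X)
        rw [hσX, hρX, map_add, map_add, hσX, hρX, hσC, hρC]
        ring
    exact AlgEquiv.ext fun p => DFunLike.congr_fun this p
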